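/- arXiv:1610.08806 — 2 statements merged into one kernel-verified Lean document; each statement's English description precedes it below -/
import Mathlib

section
/- Let ρ be a coherent risk measure on L^Φ satisfying the Fenchel–Moreau representation, and set 𝒬 = {Y ∈ L^Ψ : ρ*(−Y) = 0}. Then every Y ∈ 𝒬 satisfies E[Y] = 1, Y ≥ 0 a.s., and ρ(X) = sup_{Y∈𝒬} E[−XY] for all X ∈ L^Φ. -/
open MeasureTheory Filter Set

noncomputable section

/-- An Orlicz function: convex, increasing, vanishing at 0. -/
structure OrliczFunction where
  toFun : ℝ → ℝ
  convexOn : ConvexOn ℝ (Set.Ici (0:ℝ)) toFun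
  monoOn : MonotoneOn toFun (Set.Ici (0:ℝ))
  map_zero : toFun 0 = 0

namespace Orlicz

variable {Ω : Type*} [MeasurableSpace Ω]

/-- Membership in the Orlicz space `L^Φ`. -/
def MemLp (Φ : OrliczFunction) (μ : Measure Ω) (X : Ω → ℝ) : Prop :=
  AEStronglyMeasurable X μ ∧
    ∃ c : ℝ, 0 < c ∧ Integrable (fun ω => Φ.toFun (|X ω| / c)) μ

/-- Membership in the Orlicz heart `H^Φ`. -/
def MemHeart (Φ : OrliczFunction) (μ : Measure Ω) (X : Ω → ℝ) : Prop :=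
  AEStronglyMeasurable X μ ∧
    ∀ c : ℝ, 0 < c → Integrable (fun ω => Φ.toFun (|X ω| / c)) μ

/-- The Luxemburg norm. -/
def luxNorm (Φ : OrliczFunction) (μ : Measure Ω) (X : Ω → ℝ) : ℝ :=
  sInf {c : ℝ | 0 < c ∧ Integrable (fun ω => Φ.toFun (|X ω| / c)) μ ∧
    ∫ ω, Φ.toFun (|X ω| / c) ∂μ ≤ 1}

/-- The dual pairing `E[XY]`. -/
def pairing (μ : Measure Ω) (X Y : Ω → ℝ) : ℝ := ∫ ω, X ω * Y ω ∂μ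

/-- Order convergence in `L^Φ`: a.s. convergence together with order boundedness. -/
def OrderConvTo (Φ : OrliczFunction) (μ : Measure Ω) (X : ℕ → Ω → ℝ) (L : Ω → ℝ) : Prop :=
  (∀ᵐ ω ∂μ, Tendsto (fun n => X n ω) atTop (nhds (L ω))) ∧
    ∃ Z : Ω → ℝ, MemLp Φ μ Z ∧ ∀ n, ∀ᵐ ω ∂μ, |X n ω| ≤ Z ω

/-- A set is order closed if it contains the order limits of its order convergent sequences. -/
def OrderClosed (Φ : OrliczFunction) (μ : Measure Ω) (C : Set (Ω → ℝ)) : Prop :=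
  ∀ (X : ℕ → Ω → ℝ) (L : Ω → ℝ), (∀ n, X n ∈ C) → MemLp Φ μ L →
    OrderConvTo Φ μ X L → L ∈ C

/-- The order closure of a set in `L^Φ`. -/
def orderClosure (Φ : OrliczFunction) (μ : Measure Ω) (C : Set (Ω → ℝ)) : Set (Ω → ℝ) :=
  {L | MemLp Φ μ L ∧ ∃ X : ℕ → Ω → ℝ, (∀ n, X n ∈ C) ∧ OrderConvTo Φ μ X L}

/-- Closure in the weak topology induced by pairing against functions satisfying `dual`,
within the space of functions satisfying `mem`. -/
def wClosure (mem dual : (Ω → ℝ) → Prop) (μ : Measure Ω) (C : Set (Ω → ℝ)) :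
    Set (Ω → ℝ) :=
  {X | mem X ∧ ∀ ε : ℝ, 0 < ε → ∀ F : Finset (Ω → ℝ), (∀ Y ∈ F, dual Y) →
    ∃ Z ∈ C, ∀ Y ∈ F, |pairing μ Z Y - pairing μ X Y| < ε}

/-- Weak closedness. -/
def WClosed (mem dual : (Ω → ℝ) → Prop) (μ : Measure Ω) (C : Set (Ω → ℝ)) : Prop :=
  wClosure mem dual μ C ⊆ C

/-- Weak sequential closedness. -/
def WSeqClosed (mem dual : (Ω → ℝ) → Prop) (μ : Measure Ω) (C : Set (Ω → ℝ)) : Prop :=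
  ∀ (X : ℕ → Ω → ℝ) (L : Ω → ℝ), (∀ n, X n ∈ C) → mem L →
    (∀ Y, dual Y → Tendsto (fun n => pairing μ (X n) Y) atTop (nhds (pairing μ L Y))) →
    L ∈ C

/-- The Δ₂-condition: `Φ(2t) < k·Φ(t)` for all large `t`. -/
def Delta2 (Φ : OrliczFunction) : Prop :=
  ∃ t₀ : ℝ, 0 < t₀ ∧ ∃ k : ℝ, ∀ t : ℝ, t₀ ≤ t → Φ.toFun (2 * t) < k * Φ.toFun t

/-- `(Φ,Ψ)` is a conjugate pair of Orlicz functions, with `Φ` superlinear and positive. -/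
def IsConjugate (Φ Ψ : OrliczFunction) : Prop :=
  (∀ s : ℝ, 0 ≤ s →
      Ψ.toFun s = sSup ((fun t => t * s - Φ.toFun t) '' Set.Ici (0:ℝ))) ∧
    Tendsto (fun t => Φ.toFun t / t) atTop atTop ∧ (∀ t : ℝ, 0 < t → 0 < Φ.toFun t)

/-- Fenchel conjugate of a functional on `L^Φ`. -/
def rhoStar (Φ : OrliczFunction) (μ : Measure Ω) (ρ : (Ω → ℝ) → EReal) (Y : Ω → ℝ) :
    EReal :=
  sSup {v : EReal | ∃ X : Ω → ℝ, MemLp Φ μ X ∧ v = ((pairing μ X Y : ℝ) : EReal) - ρ X}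

/-- A coherent risk measure on `L^Φ`: proper, subadditive, monotone, cash additive and
positively homogeneous. -/
def Coherent (Φ : OrliczFunction) (μ : Measure Ω) (ρ : (Ω → ℝ) → EReal) : Prop :=
  (∀ X, ρ X ≠ ⊥) ∧
    (∃ X, MemLp Φ μ X ∧ ρ X ≠ ⊤) ∧
    (∀ X Y, MemLp Φ μ X → MemLp Φ μ Y → ρ (X + Y) ≤ ρ X + ρ Y) ∧
    (∀ X Y, MemLp Φ μ X → MemLp Φ μ Y → (∀ᵐ ω ∂μ, Y ω ≤ X ω) → ρ X ≤ ρ Y) ∧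
    (∀ (X : Ω → ℝ) (m : ℝ), MemLp Φ μ X →
      ρ (fun ω => X ω + m) = ρ X - ((m : ℝ) : EReal)) ∧
    (∀ (X : Ω → ℝ) (l : ℝ), 0 < l → MemLp Φ μ X → ρ (l • X) = ((l : ℝ) : EReal) * ρ X)

/-- The Fatou property on `L^Φ`. -/
def Fatou (Φ : OrliczFunction) (μ : Measure Ω) (ρ : (Ω → ℝ) → EReal) : Prop :=
  ∀ (X : ℕ → Ω → ℝ) (L : Ω → ℝ), (∀ n, MemLp Φ μ (X n)) → MemLp Φ μ L →
    OrderConvTo Φ μ X L → ρ L ≤ liminf (fun n => ρ (X n)) atTop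

/-- Boundedly a.s. closed subsets of the Orlicz heart. -/
def BddAEClosed (Φ : OrliczFunction) (μ : Measure Ω) (C : Set (Ω → ℝ)) : Prop :=
  ∀ (S : ℕ → Ω → ℝ) (L : Ω → ℝ), (∀ n, S n ∈ C) →
    (∃ M : ℝ, ∀ n, luxNorm Φ μ (S n) ≤ M) → MemHeart Φ μ L →
    (∀ᵐ ω ∂μ, Tendsto (fun n => S n ω) atTop (nhds (L ω))) → L ∈ C

end Orlicz

open Orlicz

section AuxiliaryLemmas

open MeasureTheory Filter Set Orlicz

variable {Ω : Type*} [MeasurableSpace Ω]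

lemma OrliczFunction.nonneg (Φ : OrliczFunction) {t : ℝ} (ht : 0 ≤ t) : 0 ≤ Φ.toFun t :=
  Φ.map_zero ▸ Φ.monoOn (by simp) ht ht

lemma OrliczFunction.measurable_comp (Φ : OrliczFunction) :
    Measurable (fun t : ℝ => Φ.toFun (max t 0)) := by
  have hm : Monotone (fun t : ℝ => Φ.toFun (max t 0)) := by
    intro s t hst
    exact Φ.monoOn (le_max_right s 0) (le_max_right t 0) (max_le_max hst le_rfl)
  exact hm.measurable

lemma ereal_exists_real {b : EReal} (h1 : b ≠ ⊥) (h2 : b ≠ ⊤) : ∃ x : ℝ, b = (x : EReal) := by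
  induction b with
  | bot => exact absurd rfl h1
  | coe x => exact ⟨x, rfl⟩
  | top => exact absurd rfl h2

lemma ereal_coe_le_of_sub_nonpos {e : ℝ} {b : EReal} (hb : b ≠ ⊥)
    (h : (e : EReal) - b ≤ 0) : (e : EReal) ≤ b := by
  induction b with
  | bot => exact absurd rfl hb
  | coe x =>
    rw [← EReal.coe_sub] at h
    exact_mod_cast sub_nonpos.mp (by exact_mod_cast h)
  | top => exact le_top

lemma memLp_neg' {Ψ : OrliczFunction} {μ : Measure Ω} {Y : Ω → ℝ}
    (h : MemLp Ψ μ Y) : MemLp Ψ μ (-Y) := by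
  obtain ⟨hm, c, hc, hi⟩ := h
  exact ⟨hm.neg, c, hc, by simpa [Pi.neg_apply, abs_neg] using hi⟩

lemma memLp_smul' {Φ : OrliczFunction} {μ : Measure Ω} {X : Ω → ℝ} {l : ℝ}
    (hl : 0 < l) (h : MemLp Φ μ X) : MemLp Φ μ (l • X) := by
  obtain ⟨hm, c, hc, hi⟩ := h
  refine ⟨hm.const_smul l, l * c, by positivity, ?_⟩
  have heq : (fun ω => Φ.toFun (|(l • X) ω| / (l * c))) = fun ω => Φ.toFun (|X ω| / c) := by
    funext ω
    rw [Pi.smul_apply, smul_eq_mul, abs_mul, abs_of_pos hl,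
      mul_div_mul_left _ _ (ne_of_gt hl)]
  rw [heq]; exact hi

lemma memLp_add_bounded' {Φ : OrliczFunction} {μ : Measure Ω} [IsProbabilityMeasure μ]
    {X W : Ω → ℝ} (hX : MemLp Φ μ X) (hW : AEStronglyMeasurable W μ)
    (C : ℝ) (hC : ∀ ω, |W ω| ≤ C) : MemLp Φ μ (fun ω => X ω + W ω) := by
  obtain ⟨hm, c, hc, hi⟩ := hX
  set C' := max C 0 with hC'def
  have hC'0 : (0:ℝ) ≤ C' := le_max_right _ _
  have hCW : ∀ ω, |W ω| ≤ C' := fun ω => le_trans (hC ω) (le_max_left _ _)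
  refine ⟨hm.add hW, 2 * c, by positivity, ?_⟩
  have hkey : ∀ ω, Φ.toFun (|X ω + W ω| / (2 * c))
      ≤ (Φ.toFun (|X ω| / c) + Φ.toFun (C' / c)) / 2 := by
    intro ω
    have h1 : |X ω + W ω| / (2 * c) ≤ (1/2 : ℝ) * (|X ω| / c) + (1/2 : ℝ) * (C' / c) := by
      have h2 : |X ω + W ω| ≤ |X ω| + C' := (abs_add_le _ _).trans (by linarith [hCW ω])
      rw [div_le_iff₀ (by positivity : (0:ℝ) < 2 * c)]
      have h5 : ((1/2 : ℝ) * (|X ω| / c) + (1/2 : ℝ) * (C' / c)) * (2 * c)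
          = |X ω| + C' := by field_simp
      rw [h5]; exact h2
    have h3 : Φ.toFun (|X ω + W ω| / (2 * c))
        ≤ Φ.toFun ((1/2 : ℝ) * (|X ω| / c) + (1/2 : ℝ) * (C' / c)) :=
      Φ.monoOn (Set.mem_Ici.mpr (by positivity)) (Set.mem_Ici.mpr (by positivity)) h1
    have h4 := Φ.convexOn.2 (x := |X ω| / c) (y := C' / c)
      (Set.mem_Ici.mpr (by positivity)) (Set.mem_Ici.mpr (by positivity))
      (by norm_num : (0:ℝ) ≤ 1/2) (by norm_num : (0:ℝ) ≤ 1/2) (by norm_num)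
    simp only [smul_eq_mul] at h4
    calc Φ.toFun (|X ω + W ω| / (2 * c))
        ≤ Φ.toFun ((1/2 : ℝ) * (|X ω| / c) + (1/2 : ℝ) * (C' / c)) := h3
      _ ≤ (1/2 : ℝ) * Φ.toFun (|X ω| / c) + (1/2 : ℝ) * Φ.toFun (C' / c) := h4
      _ = (Φ.toFun (|X ω| / c) + Φ.toFun (C' / c)) / 2 := by ring
  have hgint : Integrable (fun ω => (Φ.toFun (|X ω| / c) + Φ.toFun (C' / c)) / 2) μ :=
    (hi.add (integrable_const _)).div_const 2
  have hfm : AEStronglyMeasurable (fun ω => Φ.toFun (|X ω + W ω| / (2 * c))) μ := by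
    have heq : (fun ω => Φ.toFun (|X ω + W ω| / (2 * c)))
        = fun ω => Φ.toFun (max (|X ω + W ω| / (2 * c)) 0) := by
      funext ω; rw [max_eq_left (by positivity)]
    rw [heq]
    have habs : AEMeasurable (fun ω => |X ω + W ω| / (2 * c)) μ :=
      ((hm.add hW).norm.aemeasurable).div_const _
    exact (Φ.measurable_comp.comp_aemeasurable habs).aestronglyMeasurable
  refine Integrable.mono hgint hfm (Eventually.of_forall fun ω => ?_)
  rw [Real.norm_eq_abs, Real.norm_eq_abs,
    abs_of_nonneg (Φ.nonneg (by positivity : (0:ℝ) ≤ |X ω + W ω| / (2 * c)))]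
  exact (hkey ω).trans (le_abs_self _)

lemma rhoStar_key {Φ : OrliczFunction} {μ : Measure Ω} {ρ : (Ω → ℝ) → EReal}
    (hhom : ∀ (X : Ω → ℝ) (l : ℝ), 0 < l → MemLp Φ μ X → ρ (l • X) = ((l : ℝ) : EReal) * ρ X)
    {X : Ω → ℝ} {s : ℝ} (hXm : MemLp Φ μ X) (hs : ρ X = (s : EReal)) (Y : Ω → ℝ)
    {l : ℝ} (hl : 0 < l) :
    ((l * (pairing μ X Y - s) : ℝ) : EReal) ≤ rhoStar Φ μ ρ Y := by
  have hp : pairing μ (l • X) Y = l * pairing μ X Y := by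
    simp only [pairing, Pi.smul_apply, smul_eq_mul, mul_assoc]
    exact integral_const_mul l _
  refine le_sSup ⟨l • X, memLp_smul' hl hXm, ?_⟩
  rw [hp, hhom X l hl hXm, hs]
  rw [show ((l : ℝ) : EReal) * ((s : ℝ) : EReal) = ((l * s : ℝ) : EReal) from by
    rw [EReal.coe_mul], ← EReal.coe_sub]
  norm_cast
  ring

lemma rhoStar_nonneg' {Φ : OrliczFunction} {μ : Measure Ω} {ρ : (Ω → ℝ) → EReal}
    (hhom : ∀ (X : Ω → ℝ) (l : ℝ), 0 < l → MemLp Φ μ X → ρ (l • X) = ((l : ℝ) : EReal) * ρ X)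
    {X₀ : Ω → ℝ} {r : ℝ} (hX₀ : MemLp Φ μ X₀) (hr : ρ X₀ = (r : EReal)) (Y : Ω → ℝ) :
    0 ≤ rhoStar Φ μ ρ Y := by
  set p := pairing μ X₀ Y with hp
  have hsne : rhoStar Φ μ ρ Y ≠ ⊥ := by
    intro h
    have h1 := rhoStar_key hhom hX₀ hr Y one_pos
    rw [h] at h1
    exact EReal.coe_ne_bot _ (le_bot_iff.mp h1)
  refine le_of_forall_lt fun c hc => ?_
  induction c with
  | bot => exact bot_lt_iff_ne_bot.mpr hsne
  | coe x =>
    have hx : x < 0 := by exact_mod_cast hc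
    rcases le_or_gt 0 (p - r) with h | h
    · calc (x : EReal) < ((0:ℝ) : EReal) := by exact_mod_cast hx
        _ ≤ ((1 * (p - r) : ℝ) : EReal) := by exact_mod_cast (by linarith : (0:ℝ) ≤ 1 * (p - r))
        _ ≤ rhoStar Φ μ ρ Y := rhoStar_key hhom hX₀ hr Y one_pos
    · have hl : 0 < x / (2 * (p - r)) := div_pos_of_neg_of_neg hx (by linarith)
      have hkey := rhoStar_key hhom hX₀ hr Y hl
      have heq : x / (2 * (p - r)) * (p - r) = x / 2 := by
        have hne : p - r ≠ 0 := ne_of_lt h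
        field_simp
      rw [heq] at hkey
      calc (x : EReal) < ((x/2 : ℝ) : EReal) := by exact_mod_cast (by linarith : x < x / 2)
        _ ≤ rhoStar Φ μ ρ Y := hkey
  | top => exact absurd hc (by simp)

lemma rhoStar_eq_zero_of_ne_top' {Φ : OrliczFunction} {μ : Measure Ω} {ρ : (Ω → ℝ) → EReal}
    (hbot : ∀ X, ρ X ≠ ⊥)
    (hhom : ∀ (X : Ω → ℝ) (l : ℝ), 0 < l → MemLp Φ μ X → ρ (l • X) = ((l : ℝ) : EReal) * ρ X)
    {X₀ : Ω → ℝ} {r : ℝ} (hX₀ : MemLp Φ μ X₀) (hr : ρ X₀ = (r : EReal)) (Y : Ω → ℝ)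
    (hne : rhoStar Φ μ ρ Y ≠ ⊤) : rhoStar Φ μ ρ Y = 0 := by
  have h0 := rhoStar_nonneg' hhom hX₀ hr Y
  refine le_antisymm ?_ h0
  by_contra hpos
  push_neg at hpos
  obtain ⟨v, ⟨X, hXm, rfl⟩, hv⟩ := lt_sSup_iff.mp hpos
  have hXtop : ρ X ≠ ⊤ := by
    intro h
    rw [h] at hv
    have : ((pairing μ X Y : ℝ) : EReal) - ⊤ = ⊥ := by simp
    rw [this] at hv
    exact absurd hv (by simp)
  obtain ⟨sX, hsX⟩ := ereal_exists_real (hbot X) hXtop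
  rw [hsX, ← EReal.coe_sub] at hv
  have ht : 0 < pairing μ X Y - sX := by exact_mod_cast hv
  have hsbot : rhoStar Φ μ ρ Y ≠ ⊥ := fun h => by rw [h] at h0; exact absurd h0 (by simp)
  obtain ⟨u, hu⟩ := ereal_exists_real hsbot hne
  have hl : 0 < (|u| + 1) / (pairing μ X Y - sX) := by positivity
  have hkey := rhoStar_key hhom hXm hsX Y hl
  rw [div_mul_cancel₀ _ (ne_of_gt ht), hu] at hkey
  have : |u| + 1 ≤ u := by exact_mod_cast hkey
  linarith [le_abs_self u]

lemma pairing_le_of_rhoStar_eq_zero' {Φ : OrliczFunction} {μ : Measure Ω}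
    {ρ : (Ω → ℝ) → EReal} (hbot : ∀ X, ρ X ≠ ⊥) {Z : Ω → ℝ}
    (hZ : rhoStar Φ μ ρ Z = 0) {X : Ω → ℝ} (hX : MemLp Φ μ X) :
    ((pairing μ X Z : ℝ) : EReal) ≤ ρ X := by
  have h : ((pairing μ X Z : ℝ) : EReal) - ρ X ≤ rhoStar Φ μ ρ Z :=
    le_sSup ⟨X, hX, rfl⟩
  rw [hZ] at h
  exact ereal_coe_le_of_sub_nonpos (hbot X) h

end AuxiliaryLemmas

/-- For a coherent risk measure satisfying the Fenchel–Moreau representation, the set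
`𝒬 = {Y ∈ L^Ψ : ρ*(−Y) = 0}` consists of nonnegative random variables of expectation 1
and yields the dual representation `ρ(X) = sup_{Y∈𝒬} E[−XY]`. -/
theorem dual_representation_scenarios {Ω : Type*} [MeasurableSpace Ω]
    (μ : Measure Ω) [IsProbabilityMeasure μ] (Φ Ψ : OrliczFunction)
    (hconj : IsConjugate Φ Ψ)
    (ρ : (Ω → ℝ) → EReal) (hcoh : Coherent Φ μ ρ)
    (hFM : ∀ X, MemLp Φ μ X →
      ρ X = sSup {v : EReal | ∃ Y : Ω → ℝ, MemLp Ψ μ Y ∧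
        v = ((pairing μ X Y : ℝ) : EReal) - rhoStar Φ μ ρ Y}) :
    (∀ Y ∈ {Y : Ω → ℝ | MemLp Ψ μ Y ∧ rhoStar Φ μ ρ (-Y) = 0},
        (∫ ω, Y ω ∂μ) = 1 ∧ (∀ᵐ ω ∂μ, 0 ≤ Y ω)) ∧
      (∀ X, MemLp Φ μ X →
        ρ X = sSup {v : EReal | ∃ Y : Ω → ℝ,
          (MemLp Ψ μ Y ∧ rhoStar Φ μ ρ (-Y) = 0) ∧
          v = ((pairing μ (-X) Y : ℝ) : EReal)}) := by
  obtain ⟨hbot, ⟨X₀, hX₀, hX₀top⟩, hsub, hmono, hcash, hhom⟩ := hcoh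
  obtain ⟨r, hr⟩ := ereal_exists_real (hbot X₀) hX₀top
  constructor
  · rintro Y ⟨hYm, hQ⟩
    have hbnd : ∀ X, MemLp Φ μ X → ((pairing μ X (-Y) : ℝ) : EReal) ≤ ρ X :=
      fun X hX => pairing_le_of_rhoStar_eq_zero' hbot hQ hX
    -- key inequality at X₀ + m
    have hPm : ∀ m : ℝ, (∫ ω, (X₀ ω + m) * (-Y ω) ∂μ) ≤ r - m := by
      intro m
      have hXm : MemLp Φ μ (fun ω => X₀ ω + m) :=
        memLp_add_bounded' hX₀ aestronglyMeasurable_const |m| (fun ω => le_rfl)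
      have h := hbnd _ hXm
      rw [hcash X₀ m hX₀, hr, ← EReal.coe_sub] at h
      have h2 : pairing μ (fun ω => X₀ ω + m) (-Y) ≤ r - m := by exact_mod_cast h
      simpa [pairing, Pi.neg_apply] using h2
    -- integrability of -Y
    have hnegY_int : Integrable (fun ω => -Y ω) μ := by
      by_contra hni
      by_cases h1 : Integrable (fun ω => (X₀ ω + (r+1)) * (-Y ω)) μ
      · by_cases h2 : Integrable (fun ω => (X₀ ω + (r+2)) * (-Y ω)) μ
        · refine hni ((h2.sub h1).congr ?_)
          filter_upwards with ω; simp only [Pi.sub_apply]; ring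
        · have h3 := hPm (r+2)
          rw [integral_undef h2] at h3; linarith
      · have h3 := hPm (r+1)
        rw [integral_undef h1] at h3; linarith
    have hYint : Integrable Y μ := by
      have := hnegY_int.neg
      refine this.congr ?_
      filter_upwards with ω; simp
    have hX0g : Integrable (fun ω => X₀ ω * (-Y ω)) μ := by
      by_contra hni
      have h1 : ¬ Integrable (fun ω => (X₀ ω + (r+1)) * (-Y ω)) μ := by
        intro h
        refine hni ((h.sub (hnegY_int.const_mul (r+1))).congr ?_)
        filter_upwards with ω; simp only [Pi.sub_apply]; ring
      have h3 := hPm (r+1)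
      rw [integral_undef h1] at h3; linarith
    set a := ∫ ω, X₀ ω * (-Y ω) ∂μ with hadef
    set b := ∫ ω, -Y ω ∂μ with hbdef
    have hsplit : ∀ m : ℝ, (∫ ω, (X₀ ω + m) * (-Y ω) ∂μ) = a + m * b := by
      intro m
      rw [hadef, hbdef, show (fun ω => (X₀ ω + m) * (-Y ω))
        = fun ω => X₀ ω * (-Y ω) + m * (-Y ω) from funext fun ω => by ring]
      rw [integral_add hX0g (hnegY_int.const_mul m), integral_const_mul]
    have hab : ∀ m : ℝ, a + m * b ≤ r - m := fun m => by
      have := hPm m; rwa [hsplit m] at this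
    have hb : b = -1 := by
      by_contra hbne'
      have hbne : b + 1 ≠ 0 := fun h => hbne' (by linarith)
      have h1 := hab ((r - a + 1)/(b+1))
      have h2 : ((r - a + 1)/(b+1)) * (b+1) = r - a + 1 := div_mul_cancel₀ _ hbne
      nlinarith [h1, h2]
    have hmean : (∫ ω, Y ω ∂μ) = 1 := by
      have hbY : b = - ∫ ω, Y ω ∂μ := by rw [hbdef]; exact integral_neg Y
      rw [hb] at hbY; linarith
    refine ⟨hmean, ?_⟩
    -- nonnegativity
    have hsm := hYm.1
    set Y'' := hsm.mk Y with hY''def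
    have hY''meas : Measurable Y'' := hsm.stronglyMeasurable_mk.measurable
    have hae : Y =ᵐ[μ] Y'' := hsm.ae_eq_mk
    set A := {ω | Y'' ω < 0} with hAdef
    have hA : MeasurableSet A := measurableSet_lt hY''meas measurable_const
    set u := fun ω => A.indicator (fun _ => (1:ℝ)) ω * (-Y ω) with hudef
    have hu_nonneg : 0 ≤ᵐ[μ] u := by
      filter_upwards [hae] with ω h
      by_cases hω : ω ∈ A
      · have hlt : Y'' ω < 0 := hω
        simp only [hudef, Set.indicator_of_mem hω, one_mul, Pi.zero_apply]
        rw [h]; linarith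
      · simp [hudef, Set.indicator_of_notMem hω]
    have hu_int : Integrable u μ := by
      refine Integrable.mono hnegY_int
        (((measurable_const.indicator hA).aestronglyMeasurable).mul hsm.neg) ?_
      filter_upwards with ω
      rw [Real.norm_eq_abs, Real.norm_eq_abs, abs_mul]
      have h1 : |A.indicator (fun _ => (1:ℝ)) ω| ≤ 1 := by
        by_cases h : ω ∈ A <;> simp [Set.indicator_of_mem, Set.indicator_of_notMem, h]
      calc |A.indicator (fun _ => (1:ℝ)) ω| * |(-Y ω)| ≤ 1 * |(-Y ω)| :=
            mul_le_mul_of_nonneg_right h1 (abs_nonneg _)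
        _ = |(-Y ω)| := one_mul _
    set t := ∫ ω, u ω ∂μ with htdef
    have ht0 : 0 ≤ t := integral_nonneg_of_ae hu_nonneg
    have hint_n : ∀ n : ℕ, a + n * t ≤ r := by
      intro n
      set W := fun ω => A.indicator (fun _ => ((n:ℝ))) ω with hWdef
      have hWm : AEStronglyMeasurable W μ := (measurable_const.indicator hA).aestronglyMeasurable
      have hWb : ∀ ω, |W ω| ≤ (n:ℝ) := by
        intro ω
        by_cases h : ω ∈ A <;>
          simp [hWdef, Set.indicator_of_mem, Set.indicator_of_notMem, h, abs_of_nonneg,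
            Nat.cast_nonneg]
      have hWnn : ∀ ω, 0 ≤ W ω := by
        intro ω
        by_cases h : ω ∈ A <;>
          simp [hWdef, Set.indicator_of_mem, Set.indicator_of_notMem, h, Nat.cast_nonneg]
      have hXn : MemLp Φ μ (fun ω => X₀ ω + W ω) := memLp_add_bounded' hX₀ hWm _ hWb
      have hle : ρ (fun ω => X₀ ω + W ω) ≤ ρ X₀ :=
        hmono _ X₀ hXn hX₀ (Eventually.of_forall fun ω => by linarith [hWnn ω])
      have h := (hbnd _ hXn).trans (hle.trans_eq hr)
      have hWY : (fun ω => W ω * (-Y ω)) = fun ω => (n:ℝ) * u ω := by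
        funext ω
        by_cases hω : ω ∈ A <;>
          simp [hWdef, hudef, Set.indicator_of_mem, Set.indicator_of_notMem, hω] <;> ring
      have hWint : Integrable (fun ω => W ω * (-Y ω)) μ := by
        rw [hWY]; exact hu_int.const_mul _
      have hpair : pairing μ (fun ω => X₀ ω + W ω) (-Y) = a + n * t := by
        have heq : (fun ω => (X₀ ω + W ω) * (-Y) ω)
            = fun ω => X₀ ω * (-Y ω) + W ω * (-Y ω) := by
          funext ω; simp only [Pi.neg_apply]; ring
        rw [pairing, heq, integral_add hX0g hWint, hWY, integral_const_mul,
          hadef, htdef]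
      rw [hpair] at h
      exact_mod_cast h
    have ht : t = 0 := by
      by_contra htne
      have htpos : 0 < t := lt_of_le_of_ne ht0 (Ne.symm htne)
      obtain ⟨n, hn⟩ := exists_nat_gt ((r - a)/t)
      have h1 := hint_n n
      rw [div_lt_iff₀ htpos] at hn
      linarith
    have hu0 : u =ᵐ[μ] 0 := (integral_eq_zero_iff_of_nonneg_ae hu_nonneg hu_int).mp ht
    filter_upwards [hu0, hae] with ω h1 h2
    by_contra hneg
    push_neg at hneg
    have hωA : ω ∈ A := by
      have : Y'' ω < 0 := by rw [← h2]; exact hneg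
      exact this
    rw [hudef] at h1
    simp only [Set.indicator_of_mem hωA, one_mul, Pi.zero_apply] at h1
    have : Y'' ω < 0 := hωA
    rw [h2] at h1
    linarith
  · intro X hX
    rw [hFM X hX]
    apply le_antisymm
    · refine sSup_le ?_
      rintro v ⟨Y', hY'm, rfl⟩
      by_cases hne : rhoStar Φ μ ρ Y' = ⊤
      · rw [hne, show ((pairing μ X Y' : ℝ) : EReal) - ⊤ = ⊥ from by simp]
        exact bot_le
      · have h0 := rhoStar_eq_zero_of_ne_top' hbot hhom hX₀ hr Y' hne
        rw [h0, sub_zero]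
        refine le_sSup ⟨-Y', ⟨memLp_neg' hY'm, by rwa [neg_neg]⟩, ?_⟩
        norm_cast
        simp only [pairing, Pi.neg_apply]
        congr 1
        funext ω
        ring
    · refine sSup_le ?_
      rintro v ⟨Y, ⟨hYm, hQ⟩, rfl⟩
      refine le_sSup ⟨-Y, memLp_neg' hYm, ?_⟩
      rw [hQ, sub_zero]
      norm_cast
      simp only [pairing, Pi.neg_apply]
      congr 1
      funext ω
      ring
end
end

section
/- Let C be a convex subset of the Orlicz heart H^Φ and X ∈ H^Φ. If X lies in the σ(H^Φ,H^Ψ)-closure of C, then X is the a.s.-limit of some sequence in C. Conversely, if C is norm bounded and a sequence in C converges a.s. to X ∈ H^Φ, then that sequence σ(H^Φ,H^Ψ)-converges to X. Hence a norm bounded convex set in H^Φ is σ(H^Φ,H^Ψ)-closed if and only if it is boundedly a.s. closed. -/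
open MeasureTheory Filter Set

noncomputable section

open Orlicz
section Aux

variable {Ω : Type*} [MeasurableSpace Ω] {μ : Measure Ω}

namespace OrliczFunction

theorem nonneg_s16 (Φ : OrliczFunction) {t : ℝ} (ht : 0 ≤ t) : 0 ≤ Φ.toFun t := by
  conv_lhs => rw [← Φ.map_zero]
  exact Φ.monoOn (Set.mem_Ici.2 le_rfl) (Set.mem_Ici.2 ht) ht

theorem mono' (Φ : OrliczFunction) {s t : ℝ} (hs : 0 ≤ s) (hst : s ≤ t) :
    Φ.toFun s ≤ Φ.toFun t :=
  Φ.monoOn (Set.mem_Ici.2 hs) (Set.mem_Ici.2 (hs.trans hst)) hst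

theorem le_linear (Φ : OrliczFunction) {t : ℝ} (h0 : 0 ≤ t) (h1 : t ≤ 1) :
    Φ.toFun t ≤ t * Φ.toFun 1 := by
  have := Φ.convexOn.2 (Set.mem_Ici.2 (le_refl (0:ℝ))) (Set.mem_Ici.2 (zero_le_one (α := ℝ)))
    (show (0:ℝ) ≤ 1 - t by linarith) h0 (by ring)
  simp only [smul_eq_mul, mul_zero, zero_add, mul_one, Φ.map_zero] at this
  linarith

theorem aestronglyMeasurable_comp (Φ : OrliczFunction) {X : Ω → ℝ} (hX : AEStronglyMeasurable X μ)
    {c : ℝ} (hc : 0 < c) : AEStronglyMeasurable (fun ω => Φ.toFun (|X ω| / c)) μ := by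
  have hm : Monotone (fun t : ℝ => Φ.toFun (max t 0)) := fun a b hab =>
    Φ.monoOn (Set.mem_Ici.2 (le_max_right _ _)) (Set.mem_Ici.2 (le_max_right _ _))
      (max_le_max hab le_rfl)
  have heq : (fun ω => Φ.toFun (|X ω| / c)) =
      (fun t : ℝ => Φ.toFun (max t 0)) ∘ (fun ω => |X ω| / c) := by
    funext ω
    simp [max_eq_left (div_nonneg (abs_nonneg _) hc.le)]
  rw [heq]
  exact (hm.measurable.comp_aemeasurable
    (((measurable_abs.comp_aemeasurable hX.aemeasurable)).div_const c)).aestronglyMeasurable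

end OrliczFunction

/-- Superlinearity gives a linear lower bound for large arguments. -/
theorem orlicz_exists_linear_le (Φ : OrliczFunction)
    (h : Filter.Tendsto (fun t => Φ.toFun t / t) atTop atTop) (r : ℝ) :
    ∃ T : ℝ, 0 < T ∧ ∀ t, T ≤ t → r * t ≤ Φ.toFun t := by
  obtain ⟨T, hT⟩ := (h.eventually_ge_atTop r).exists_forall_of_atTop
  refine ⟨max T 1, by positivity, fun t ht => ?_⟩
  have ht1 : (1:ℝ) ≤ t := le_trans (le_max_right _ _) ht
  have htpos : 0 < t := lt_of_lt_of_le one_pos ht1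
  have := hT t (le_trans (le_max_left _ _) ht)
  calc r * t ≤ (Φ.toFun t / t) * t := by
        exact mul_le_mul_of_nonneg_right this htpos.le
    _ = Φ.toFun t := div_mul_cancel₀ _ htpos.ne'

/-- Members of the Orlicz heart are integrable (using superlinearity of `Φ`). -/
theorem MemHeart.integrable' {Φ : OrliczFunction}
    (hsup : Filter.Tendsto (fun t => Φ.toFun t / t) atTop atTop)
    [IsFiniteMeasure μ] {X : Ω → ℝ} (hX : MemHeart Φ μ X) : Integrable X μ := by
  obtain ⟨T, hT, hTle⟩ := orlicz_exists_linear_le Φ hsup 1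
  refine Integrable.mono' ((integrable_const T).add (hX.2 1 one_pos)) hX.1 ?_
  refine Filter.Eventually.of_forall fun ω => ?_
  simp only [Pi.add_apply]
  rw [Real.norm_eq_abs]
  rcases le_or_gt T (|X ω|) with h | h
  · have := hTle _ h
    simp only [one_mul] at this
    have h0 : 0 ≤ T := hT.le
    calc |X ω| ≤ Φ.toFun (|X ω|) := this
      _ = Φ.toFun (|X ω| / 1) := by norm_num
      _ ≤ T + Φ.toFun (|X ω| / 1) := by linarith
  · have h2 : 0 ≤ Φ.toFun (|X ω| / 1) := Φ.nonneg_s16 (by positivity)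
    linarith

/-- Young's inequality for a conjugate Orlicz pair. -/
theorem orlicz_young {Φ Ψ : OrliczFunction} (hconj : IsConjugate Φ Ψ) {a b : ℝ}
    (ha : 0 ≤ a) (hb : 0 ≤ b) : a * b ≤ Φ.toFun a + Ψ.toFun b := by
  obtain ⟨T, hT0, hT⟩ := orlicz_exists_linear_le Φ hconj.2.1 (b + 1)
  have hbdd : BddAbove ((fun t => t * b - Φ.toFun t) '' Set.Ici (0:ℝ)) := by
    refine ⟨T * b, ?_⟩
    rintro x ⟨t, ht, rfl⟩
    rw [Set.mem_Ici] at ht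
    show t * b - Φ.toFun t ≤ T * b
    rcases le_or_gt t T with h | h
    · have h1 : 0 ≤ Φ.toFun t := Φ.nonneg_s16 ht
      have h2 : t * b ≤ T * b := mul_le_mul_of_nonneg_right h hb
      linarith
    · have := hT t h.le
      nlinarith
  have hmem : a * b - Φ.toFun a ∈ (fun t => t * b - Φ.toFun t) '' Set.Ici (0:ℝ) :=
    Set.mem_image_of_mem _ (Set.mem_Ici.2 ha)
  have := le_csSup hbdd hmem
  rw [← hconj.1 b hb] at this
  linarith

end Aux
section Aux2

variable {Ω : Type*} [MeasurableSpace Ω] {μ : Measure Ω}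

/-- Bounded measurable functions belong to every Orlicz heart. -/
theorem memHeart_of_bound (Ψ : OrliczFunction) [IsFiniteMeasure μ] {Y : Ω → ℝ} {K : ℝ}
    (hY : AEStronglyMeasurable Y μ) (hK : ∀ᵐ ω ∂μ, |Y ω| ≤ K) : MemHeart Ψ μ Y := by
  refine ⟨hY, fun c hc => ?_⟩
  refine Integrable.mono' (integrable_const (Ψ.toFun (max K 0 / c)))
    (Ψ.aestronglyMeasurable_comp hY hc) ?_
  filter_upwards [hK] with ω hω
  rw [Real.norm_eq_abs, abs_of_nonneg (Ψ.nonneg_s16 (div_nonneg (abs_nonneg _) hc.le))]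
  exact Ψ.mono' (div_nonneg (abs_nonneg _) hc.le)
    (div_le_div_of_nonneg_right (le_trans hω (le_max_left _ _)) hc.le)

theorem integral_phi_tendsto_zero (Φ : OrliczFunction) [IsFiniteMeasure μ] {X : Ω → ℝ}
    (hX : MemHeart Φ μ X) :
    Filter.Tendsto (fun n : ℕ => ∫ ω, Φ.toFun (|X ω| / (n + 1)) ∂μ) atTop (nhds 0) := by
  have key : Filter.Tendsto (fun n : ℕ => ∫ ω, Φ.toFun (|X ω| / (n + 1)) ∂μ) atTop
      (nhds (∫ _ω, (0:ℝ) ∂μ)) := by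
    refine tendsto_integral_of_dominated_convergence (fun ω => Φ.toFun (|X ω| / 1))
      (fun n => Φ.aestronglyMeasurable_comp hX.1 (by positivity)) (hX.2 1 one_pos) ?_ ?_
    · intro n
      refine Filter.Eventually.of_forall fun ω => ?_
      have h1 : (0:ℝ) ≤ |X ω| / (n + 1) := by positivity
      rw [Real.norm_eq_abs, abs_of_nonneg (Φ.nonneg_s16 h1)]
      refine Φ.mono' h1 ?_
      apply div_le_div_of_nonneg_left (abs_nonneg _) one_pos
      · norm_num
    · refine Filter.Eventually.of_forall fun ω => ?_
      have h0 : Filter.Tendsto (fun n : ℕ => |X ω| / (n + 1)) atTop (nhds 0) := by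
        simpa [div_eq_mul_inv] using (tendsto_one_div_add_atTop_nhds_zero_nat).const_mul (|X ω|)
      refine squeeze_zero' ?_ ?_ (by simpa using h0.const_mul (Φ.toFun 1))
      · exact Filter.Eventually.of_forall fun n => Φ.nonneg_s16 (by positivity)
      · have : ∀ᶠ n : ℕ in atTop, |X ω| / (n + 1) ≤ 1 := by
          exact h0.eventually_le_const (show (0:ℝ) < 1 from one_pos)
        filter_upwards [this] with n hn
        calc Φ.toFun (|X ω| / (n + 1)) ≤ (|X ω| / (n + 1)) * Φ.toFun 1 :=
              Φ.le_linear (by positivity) hn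
          _ = Φ.toFun 1 * (|X ω| / (n + 1)) := mul_comm _ _
  simpa using key

theorem luxNorm_nonneg (Φ : OrliczFunction) (X : Ω → ℝ) : 0 ≤ luxNorm Φ μ X :=
  Real.sInf_nonneg fun _c hc => hc.1.le

theorem integral_le_one_of_luxNorm_lt (Φ : OrliczFunction) [IsFiniteMeasure μ] {X : Ω → ℝ}
    (hX : MemHeart Φ μ X) {c : ℝ} (hc : luxNorm Φ μ X < c) :
    ∫ ω, Φ.toFun (|X ω| / c) ∂μ ≤ 1 := by
  set A := {c : ℝ | 0 < c ∧ Integrable (fun ω => Φ.toFun (|X ω| / c)) μ ∧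
    ∫ ω, Φ.toFun (|X ω| / c) ∂μ ≤ 1} with hA
  have hne : A.Nonempty := by
    have := (integral_phi_tendsto_zero Φ hX).eventually_le_const (show (0:ℝ) < 1 from one_pos)
    obtain ⟨n, hn⟩ := this.exists
    exact ⟨(n : ℝ) + 1, by positivity, hX.2 _ (by positivity), hn⟩
  obtain ⟨c', hc'A, hc'lt⟩ := exists_lt_of_csInf_lt hne hc
  have hc'pos : 0 < c' := hc'A.1
  have hcpos : 0 < c := lt_trans hc'pos hc'lt
  calc ∫ ω, Φ.toFun (|X ω| / c) ∂μ ≤ ∫ ω, Φ.toFun (|X ω| / c') ∂μ := by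
        refine integral_mono (hX.2 c hcpos) hc'A.2.1 fun ω => ?_
        refine Φ.mono' (by positivity) ?_
        exact div_le_div_of_nonneg_left (abs_nonneg _) hc'pos hc'lt.le
    _ ≤ 1 := hc'A.2.2

/-- Products are integrable by Young's inequality. -/
theorem integrable_mul_orlicz {Φ Ψ : OrliczFunction} (hconj : IsConjugate Φ Ψ)
    {X Y : Ω → ℝ} {c d : ℝ} (hc : 0 < c) (hd : 0 < d)
    (hXm : AEStronglyMeasurable X μ) (hYm : AEStronglyMeasurable Y μ)
    (hXi : Integrable (fun ω => Φ.toFun (|X ω| / c)) μ)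
    (hYi : Integrable (fun ω => Ψ.toFun (|Y ω| / d)) μ) :
    Integrable (fun ω => X ω * Y ω) μ := by
  refine Integrable.mono'
    (((hXi.add hYi).const_mul (c * d))) (hXm.mul hYm) ?_
  refine Filter.Eventually.of_forall fun ω => ?_
  simp only [Pi.add_apply]
  rw [Real.norm_eq_abs, abs_mul]
  have key : (|X ω| / c) * (|Y ω| / d) ≤ Φ.toFun (|X ω| / c) + Ψ.toFun (|Y ω| / d) :=
    orlicz_young hconj (by positivity) (by positivity)
  have : |X ω| * |Y ω| = (c * d) * ((|X ω| / c) * (|Y ω| / d)) := by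
    field_simp
  rw [this]
  exact mul_le_mul_of_nonneg_left key (by positivity)

end Aux2
section Aux3

variable {Ω : Type*} [MeasurableSpace Ω]

/-- Key convergence lemma (second part of the theorem): a.s. convergence of a norm bounded
sequence implies weak convergence of pairings. -/
theorem pairing_tendsto_of_ae (μ : Measure Ω) [IsProbabilityMeasure μ]
    {Φ Ψ : OrliczFunction} (hconj : IsConjugate Φ Ψ)
    {S : ℕ → Ω → ℝ} {X : Ω → ℝ} (hSheart : ∀ n, MemHeart Φ μ (S n))
    {M : ℝ} (hSM : ∀ n, luxNorm Φ μ (S n) ≤ M) (hX : MemHeart Φ μ X)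
    (hae : ∀ᵐ ω ∂μ, Filter.Tendsto (fun n => S n ω) atTop (nhds (X ω)))
    {Y : Ω → ℝ} (hY : MemHeart Ψ μ Y) :
    Filter.Tendsto (fun n => pairing μ (S n) Y) atTop (nhds (pairing μ X Y)) := by
  set c : ℝ := max M 0 + 1 with hc_def
  have hc : 0 < c := by positivity
  have hS1 : ∀ n, ∫ ω, Φ.toFun (|S n ω| / c) ∂μ ≤ 1 := fun n =>
    integral_le_one_of_luxNorm_lt Φ (hSheart n)
      (lt_of_le_of_lt (le_trans (hSM n) (le_max_left _ _)) (lt_add_one _))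
  have hint : ∀ n, Integrable (fun ω => S n ω * Y ω) μ := fun n =>
    integrable_mul_orlicz hconj hc one_pos (hSheart n).1 hY.1 ((hSheart n).2 c hc)
      (hY.2 1 one_pos)
  have hXY : Integrable (fun ω => X ω * Y ω) μ :=
    integrable_mul_orlicz hconj one_pos one_pos hX.1 hY.1 (hX.2 1 one_pos) (hY.2 1 one_pos)
  have hui : UnifIntegrable (fun n ω => S n ω * Y ω) 1 μ := by
    intro ε hε
    set d : ℝ := ε / (2 * c) with hd_def
    have hd : 0 < d := by positivity
    set g : Ω → ℝ := fun ω => Ψ.toFun (|Y ω| / d) with hg_def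
    have hgint : Integrable g μ := hY.2 d hd
    have hgnn : ∀ ω, 0 ≤ g ω := fun ω => Ψ.nonneg_s16 (by positivity)
    obtain ⟨δ, hδpos, hδ⟩ := (memLp_one_iff_integrable.2 hgint).eLpNorm_indicator_le
      le_rfl ENNReal.one_ne_top (show (0:ℝ) < 1 from one_pos)
    refine ⟨δ, hδpos, fun n s hs hμs => ?_⟩
    have hind : Integrable (s.indicator fun ω => S n ω * Y ω) μ := (hint n).indicator hs
    -- the set integral of `g` is at most 1
    have hsetg : ∫ ω in s, g ω ∂μ ≤ 1 := by
      have h1 := hδ s hs hμs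
      have h2 : Integrable (s.indicator g) μ := hgint.indicator hs
      have h3 : ENNReal.ofReal (∫ ω, ‖s.indicator g ω‖ ∂μ) = eLpNorm (s.indicator g) 1 μ := by
        rw [ofReal_integral_norm_eq_lintegral_enorm h2, eLpNorm_one_eq_lintegral_enorm]
      have h4 : ∫ ω, ‖s.indicator g ω‖ ∂μ ≤ 1 := by
        refine (ENNReal.ofReal_le_ofReal_iff zero_le_one).1 ?_
        rw [h3]
        exact h1
      have h5 : (fun ω => ‖s.indicator g ω‖) = s.indicator g := by
        funext ω
        rw [Real.norm_eq_abs, abs_of_nonneg]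
        exact Set.indicator_nonneg (fun ω _ => hgnn ω) ω
      rw [← integral_indicator hs, ← h5]
      exact h4
    -- the main estimate
    have hbound : ∫ ω in s, |S n ω * Y ω| ∂μ ≤ ε := by
      have hmono : ∫ ω in s, |S n ω * Y ω| ∂μ ≤
          ∫ ω in s, (c * d) * (Φ.toFun (|S n ω| / c) + g ω) ∂μ := by
        refine integral_mono ((hint n).abs.restrict)
          ((((hSheart n).2 c hc).add hgint).const_mul (c * d)).restrict fun ω => ?_
        rw [abs_mul]
        have key := orlicz_young hconj (show (0:ℝ) ≤ |S n ω| / c by positivity)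
          (show (0:ℝ) ≤ |Y ω| / d by positivity)
        have heq : |S n ω| * |Y ω| = (c * d) * ((|S n ω| / c) * (|Y ω| / d)) := by
          field_simp
        rw [heq]
        exact mul_le_mul_of_nonneg_left key (by positivity)
      have hsplit : ∫ ω in s, (c * d) * (Φ.toFun (|S n ω| / c) + g ω) ∂μ =
          (c * d) * ((∫ ω in s, Φ.toFun (|S n ω| / c) ∂μ) + ∫ ω in s, g ω ∂μ) := by
        rw [integral_const_mul, integral_add (((hSheart n).2 c hc).restrict) hgint.restrict]
      have hphi : ∫ ω in s, Φ.toFun (|S n ω| / c) ∂μ ≤ 1 := by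
        refine le_trans (setIntegral_le_integral ((hSheart n).2 c hc) ?_) (hS1 n)
        exact Filter.Eventually.of_forall fun ω => Φ.nonneg_s16 (by positivity)
      have : ∫ ω in s, |S n ω * Y ω| ∂μ ≤ (c * d) * 2 := by
        refine le_trans hmono ?_
        rw [hsplit]
        exact mul_le_mul_of_nonneg_left (by linarith) (by positivity)
      calc ∫ ω in s, |S n ω * Y ω| ∂μ ≤ (c * d) * 2 := this
        _ = ε := by
          rw [hd_def]
          field_simp
    -- convert to eLpNorm
    have h3 : ENNReal.ofReal (∫ ω, ‖s.indicator (fun ω => S n ω * Y ω) ω‖ ∂μ) =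
        eLpNorm (s.indicator fun ω => S n ω * Y ω) 1 μ := by
      rw [ofReal_integral_norm_eq_lintegral_enorm hind, eLpNorm_one_eq_lintegral_enorm]
    rw [← h3]
    refine ENNReal.ofReal_le_ofReal ?_
    have h6 : ∫ ω, ‖s.indicator (fun ω => S n ω * Y ω) ω‖ ∂μ =
        ∫ ω in s, |S n ω * Y ω| ∂μ := by
      rw [← integral_indicator hs]
      congr 1
      funext ω
      rw [norm_indicator_eq_indicator_norm]
      rfl
    rw [h6]
    exact hbound
  have haep : ∀ᵐ ω ∂μ, Filter.Tendsto (fun n => S n ω * Y ω) atTop (nhds (X ω * Y ω)) := by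
    filter_upwards [hae] with ω h
    exact h.mul_const (Y ω)
  have hvit := tendsto_Lp_finite_of_tendsto_ae (μ := μ) (p := 1) le_rfl ENNReal.one_ne_top
    (fun n => (hint n).1) (memLp_one_iff_integrable.2 hXY) hui haep
  have hl1 : Filter.Tendsto (fun n => ∫⁻ ω, ‖S n ω * Y ω - X ω * Y ω‖ₑ ∂μ) atTop (nhds 0) := by
    simp only [eLpNorm_one_eq_lintegral_enorm, Pi.sub_apply] at hvit
    exact hvit
  have := tendsto_integral_of_L1 (μ := μ) (fun ω => X ω * Y ω) hXY.1
    (Filter.Eventually.of_forall hint) hl1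
  simpa [pairing] using this

end Aux3
section Dual

variable {Ω : Type*} [MeasurableSpace Ω]

/-- Indicators of a countable disjoint family sum up (in `L¹`) to the indicator of the union. -/
theorem hasSum_indicatorConstLp_one (μ : Measure Ω) [IsFiniteMeasure μ] {A : ℕ → Set Ω}
    (hA : ∀ i, MeasurableSet (A i)) (hd : Pairwise (Function.onFun Disjoint A)) :
    HasSum (fun i => (indicatorConstLp 1 (hA i) (measure_ne_top μ _) (1:ℝ) : Lp ℝ 1 μ))
      (indicatorConstLp 1 (MeasurableSet.iUnion hA) (measure_ne_top μ _) (1:ℝ)) := by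
  classical
  set g : ℕ → Lp ℝ 1 μ := fun i => indicatorConstLp 1 (hA i) (measure_ne_top μ _) 1 with hg
  have htsum : ∑' i, μ (A i) = μ (⋃ i, A i) := (measure_iUnion hd hA).symm
  have htsum_ne : ∑' i, μ (A i) ≠ ⊤ := by rw [htsum]; exact measure_ne_top μ _
  have hnorm : ∀ i, ‖g i‖ = (μ (A i)).toReal := by
    intro i
    rw [hg]
    rw [norm_indicatorConstLp one_ne_zero ENNReal.one_ne_top]
    simp [Measure.real]
  have hsummable : Summable g := by
    refine Summable.of_norm ?_
    have : (fun i => ‖g i‖) = fun i => (μ (A i)).toReal := funext hnorm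
    rw [this]
    exact ENNReal.summable_toReal htsum_ne
  obtain ⟨L, hL⟩ := hsummable
  set U : Set Ω := ⋃ i, A i with hU
  set V : ℕ → Set Ω := fun n => ⋃ i ∈ Finset.range n, A i with hV
  have hVmeas : ∀ n, MeasurableSet (V n) := fun n =>
    (Finset.range n).measurableSet_biUnion (fun i _ => hA i)
  have hVU : ∀ n, V n ⊆ U := by
    intro n ω hω
    simp only [hV, Set.mem_iUnion] at hω
    obtain ⟨i, _, hi⟩ := hω
    exact Set.mem_iUnion.2 ⟨i, hi⟩
  -- coeFn of partial sums
  have hcoe : ∀ n, (((∑ i ∈ Finset.range n, g i : Lp ℝ 1 μ)) : Ω → ℝ) =ᵐ[μ]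
      (V n).indicator (fun _ => (1:ℝ)) := by
    intro n
    induction n with
    | zero =>
        simp only [Finset.range_zero, Finset.sum_empty, hV]
        refine (Lp.coeFn_zero _ _ _).trans ?_
        refine Filter.EventuallyEq.of_eq ?_
        funext ω
        simp
    | succ n ih =>
        rw [Finset.sum_range_succ]
        refine (Lp.coeFn_add _ _).trans ?_
        have h2 : ((g n : Lp ℝ 1 μ) : Ω → ℝ) =ᵐ[μ] (A n).indicator (fun _ => (1:ℝ)) :=
          indicatorConstLp_coeFn
        filter_upwards [ih, h2] with ω h1 h2
        simp only [Pi.add_apply, h1, h2]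
        have hdisj : ω ∉ V n ∨ ω ∉ A n := by
          by_contra h
          push_neg at h
          obtain ⟨hωV, hωA⟩ := h
          simp only [hV, Set.mem_iUnion, Finset.mem_range] at hωV
          obtain ⟨i, hi, hωi⟩ := hωV
          exact Set.disjoint_left.1 (hd (Nat.ne_of_lt hi)) hωi hωA
        have hVsucc : V (n + 1) = V n ∪ A n := by
          simp only [hV]
          ext ω
          simp [Finset.mem_range, Nat.lt_succ_iff_lt_or_eq]
          constructor
          · rintro ⟨i, hi, hωi⟩
            rcases Nat.lt_or_eq_of_le hi with hi | rfl
            · exact Or.inl ⟨i, hi, hωi⟩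
            · exact Or.inr hωi
          · rintro (⟨i, hi, hωi⟩ | hω)
            · exact ⟨i, hi.le, hωi⟩
            · exact ⟨n, le_rfl, hω⟩
        rw [hVsucc]
        rcases hdisj with h | h
        · by_cases hωA : ω ∈ A n
          · rw [Set.indicator_of_notMem h, Set.indicator_of_mem hωA,
              Set.indicator_of_mem (Set.mem_union_right _ hωA)]
            norm_num
          · rw [Set.indicator_of_notMem h, Set.indicator_of_notMem hωA]
            by_cases hωV : ω ∈ V n ∪ A n
            · exact absurd hωV (by simp [h, hωA])
            · rw [Set.indicator_of_notMem hωV]; norm_num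
        · by_cases hωV : ω ∈ V n
          · rw [Set.indicator_of_mem hωV, Set.indicator_of_notMem h,
              Set.indicator_of_mem (Set.mem_union_left _ hωV)]
            norm_num
          · rw [Set.indicator_of_notMem hωV, Set.indicator_of_notMem h]
            by_cases hω : ω ∈ V n ∪ A n
            · exact absurd hω (by simp [hωV, h])
            · rw [Set.indicator_of_notMem hω]; norm_num
  -- the norm of the difference tends to zero
  have hmeasdiff : Filter.Tendsto (fun n => μ (U \ V n)) atTop (nhds 0) := by
    have hsub : ∀ n, U \ V n ⊆ ⋃ k, A (k + n) := by
      intro n ω hω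
      obtain ⟨hωU, hωV⟩ := hω
      obtain ⟨j, hj⟩ := Set.mem_iUnion.1 hωU
      have hjn : n ≤ j := by
        by_contra h
        push_neg at h
        exact hωV (by
          simp only [hV, Set.mem_iUnion, Finset.mem_range]
          exact ⟨j, h, hj⟩)
      refine Set.mem_iUnion.2 ⟨j - n, ?_⟩
      rwa [Nat.sub_add_cancel hjn]
    have hbound : ∀ n, μ (U \ V n) ≤ ∑' k, μ (A (k + n)) := fun n =>
      le_trans (measure_mono (hsub n)) (measure_iUnion_le _)
    refine tendsto_of_tendsto_of_tendsto_of_le_of_le tendsto_const_nhds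
      (ENNReal.tendsto_sum_nat_add _ htsum_ne) (fun n => zero_le) hbound
  have htendnorm : Filter.Tendsto
      (fun n => ‖(∑ i ∈ Finset.range n, g i) -
        indicatorConstLp 1 (MeasurableSet.iUnion hA) (measure_ne_top μ _) (1:ℝ)‖)
      atTop (nhds 0) := by
    have hnormeq : ∀ n, ‖(∑ i ∈ Finset.range n, g i) -
        indicatorConstLp 1 (MeasurableSet.iUnion hA) (measure_ne_top μ _) (1:ℝ)‖ =
        (μ (U \ V n)).toReal := by
      intro n
      rw [Lp.norm_def]
      have hdiff : (((∑ i ∈ Finset.range n, g i) -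
          indicatorConstLp 1 (MeasurableSet.iUnion hA) (measure_ne_top μ _) (1:ℝ) : Lp ℝ 1 μ)
          : Ω → ℝ) =ᵐ[μ] (U \ V n).indicator (fun _ => (-1:ℝ)) := by
        refine (Lp.coeFn_sub _ _).trans ?_
        filter_upwards [hcoe n, (indicatorConstLp_coeFn :
          ((indicatorConstLp 1 (MeasurableSet.iUnion hA) (measure_ne_top μ _) (1:ℝ) : Lp ℝ 1 μ)
            : Ω → ℝ) =ᵐ[μ] U.indicator (fun _ => (1:ℝ)))] with ω h1 h2
        simp only [Pi.sub_apply, h1, h2]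
        by_cases hωV : ω ∈ V n
        · rw [Set.indicator_of_mem hωV, Set.indicator_of_mem (hVU n hωV),
            Set.indicator_of_notMem (fun h => (Set.mem_diff ω |>.1 h).2 hωV)]
          norm_num
        · rw [Set.indicator_of_notMem hωV]
          by_cases hωU : ω ∈ U
          · rw [Set.indicator_of_mem hωU, Set.indicator_of_mem (Set.mem_diff ω |>.2 ⟨hωU, hωV⟩)]
            norm_num
          · rw [Set.indicator_of_notMem hωU,
              Set.indicator_of_notMem (fun h => hωU (Set.mem_diff ω |>.1 h).1)]
            norm_num
      rw [eLpNorm_congr_ae hdiff,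
        eLpNorm_indicator_const ((MeasurableSet.iUnion hA).diff (hVmeas n)) one_ne_zero
          ENNReal.one_ne_top]
      simp
      rfl
    have : Filter.Tendsto (fun n => (μ (U \ V n)).toReal) atTop (nhds 0) := by
      have h1 := (ENNReal.tendsto_toReal (a := 0) (by simp)).comp hmeasdiff
      simpa [Function.comp_def] using h1
    refine this.congr fun n => ?_
    exact (hnormeq n).symm
  have htend : Filter.Tendsto (fun n => ∑ i ∈ Finset.range n, g i) atTop
      (nhds (indicatorConstLp 1 (MeasurableSet.iUnion hA) (measure_ne_top μ _) (1:ℝ))) :=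
    tendsto_iff_norm_sub_tendsto_zero.2 htendnorm
  have hLeq : L = indicatorConstLp 1 (MeasurableSet.iUnion hA) (measure_ne_top μ _) (1:ℝ) :=
    tendsto_nhds_unique hL.tendsto_sum_nat htend
  rwa [hLeq] at hL

end Dual
section Repr

variable {Ω : Type*} [MeasurableSpace Ω]

set_option maxHeartbeats 1000000 in
/-- Representation of continuous linear functionals on `L¹` by bounded measurable functions. -/
theorem exists_repr_L1 (μ : Measure Ω) [IsProbabilityMeasure μ] (f : Lp ℝ 1 μ →L[ℝ] ℝ) :
    ∃ (Y : Ω → ℝ) (K : ℝ), Measurable Y ∧ (∀ ω, |Y ω| ≤ K) ∧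
      ∀ g : Lp ℝ 1 μ, f g = ∫ ω, (g : Ω → ℝ) ω * Y ω ∂μ := by
  classical
  set sm : SignedMeasure Ω :=
    { measureOf' := fun A => if h : MeasurableSet A then
        f (indicatorConstLp 1 h (measure_ne_top μ A) (1:ℝ)) else 0
      empty' := by
        beta_reduce
        rw [dif_pos MeasurableSet.empty]
        have : (indicatorConstLp 1 MeasurableSet.empty (measure_ne_top μ ∅) (1:ℝ) : Lp ℝ 1 μ)
            = 0 := by
          refine Lp.ext ?_
          refine indicatorConstLp_coeFn.trans ?_
          refine Filter.EventuallyEq.trans (Filter.EventuallyEq.of_eq ?_)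
            (Lp.coeFn_zero ℝ 1 μ).symm
          funext ω; simp
        rw [this, map_zero]
      not_measurable' := fun _A h => dif_neg h
      m_iUnion' := by
        intro A hA hd
        beta_reduce
        have h2 := (hasSum_indicatorConstLp_one μ hA hd).mapL f
        have e1 : (fun i => if h : MeasurableSet (A i) then
            f (indicatorConstLp 1 h (measure_ne_top μ (A i)) (1:ℝ)) else 0) =
            fun i => f (indicatorConstLp 1 (hA i) (measure_ne_top μ (A i)) 1) := by
          funext i; rw [dif_pos (hA i)]
        rw [e1, dif_pos (MeasurableSet.iUnion hA)]
        exact h2 } with hsm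
  have hsmA : ∀ {A : Set Ω} (hA : MeasurableSet A),
      sm A = f (indicatorConstLp 1 hA (measure_ne_top μ A) 1) := by
    intro A hA
    show (if h : MeasurableSet A then
        f (indicatorConstLp 1 h (measure_ne_top μ A) (1:ℝ)) else 0) = _
    rw [dif_pos hA]
  have hac : sm ≪ᵥ μ.toENNRealVectorMeasure := by
    refine MeasureTheory.VectorMeasure.AbsolutelyContinuous.mk fun A hA hμA => ?_
    rw [MeasureTheory.Measure.toENNRealVectorMeasure_apply_measurable hA] at hμA
    rw [hsmA hA]
    have : (indicatorConstLp 1 hA (measure_ne_top μ A) (1:ℝ) : Lp ℝ 1 μ) = 0 := by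
      refine Lp.ext ?_
      refine indicatorConstLp_coeFn.trans ?_
      exact (indicator_meas_zero hμA).trans (Lp.coeFn_zero ℝ 1 μ).symm
    rw [this, map_zero]
  have hrn : μ.withDensityᵥ (sm.rnDeriv μ) = sm :=
    MeasureTheory.SignedMeasure.withDensityᵥ_rnDeriv_eq sm μ hac
  set Y₀ : Ω → ℝ := sm.rnDeriv μ with hY₀
  have hY₀meas : Measurable Y₀ := MeasureTheory.SignedMeasure.measurable_rnDeriv sm μ
  have hY₀int : Integrable Y₀ μ := MeasureTheory.SignedMeasure.integrable_rnDeriv sm μ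
  have hsetint : ∀ {A : Set Ω} (hA : MeasurableSet A),
      ∫ ω in A, Y₀ ω ∂μ = f (indicatorConstLp 1 hA (measure_ne_top μ A) 1) := by
    intro A hA
    rw [← hsmA hA, ← hrn, MeasureTheory.withDensityᵥ_apply hY₀int hA]
  set K : ℝ := ‖f‖ + 1 with hK
  have hKpos : 0 < K := by positivity
  have hup : μ {ω | K ≤ Y₀ ω} = 0 := by
    by_contra hne
    set A := {ω | K ≤ Y₀ ω} with hA_def
    have hA : MeasurableSet A := measurableSet_le measurable_const hY₀meas
    have h1 : K * (μ A).toReal ≤ ∫ ω in A, Y₀ ω ∂μ :=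
      setIntegral_ge_of_const_le_real hA (measure_ne_top μ A) (fun ω hω => hω)
        hY₀int.integrableOn
    have h2 : |f (indicatorConstLp 1 hA (measure_ne_top μ A) 1)| ≤ ‖f‖ * (μ A).toReal := by
      have h := f.le_opNorm (indicatorConstLp 1 hA (measure_ne_top μ A) 1)
      rw [norm_indicatorConstLp one_ne_zero ENNReal.one_ne_top] at h
      simpa [Measure.real] using h
    have h3 : 0 < (μ A).toReal := ENNReal.toReal_pos hne (measure_ne_top μ A)
    rw [hsetint hA] at h1
    have h4 : K * (μ A).toReal ≤ ‖f‖ * (μ A).toReal :=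
      le_trans h1 (le_trans (le_abs_self _) h2)
    nlinarith
  have hdown : μ {ω | Y₀ ω ≤ -K} = 0 := by
    by_contra hne
    set B := {ω | Y₀ ω ≤ -K} with hB_def
    have hB : MeasurableSet B := measurableSet_le hY₀meas measurable_const
    have h1 : K * (μ B).toReal ≤ ∫ ω in B, -Y₀ ω ∂μ := by
      refine setIntegral_ge_of_const_le_real hB (measure_ne_top μ B) (fun ω hω => by
        have : Y₀ ω ≤ -K := hω
        linarith) hY₀int.neg.integrableOn
    rw [integral_neg] at h1
    have h2 : |f (indicatorConstLp 1 hB (measure_ne_top μ B) 1)| ≤ ‖f‖ * (μ B).toReal := by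
      have h := f.le_opNorm (indicatorConstLp 1 hB (measure_ne_top μ B) 1)
      rw [norm_indicatorConstLp one_ne_zero ENNReal.one_ne_top] at h
      simpa [Measure.real] using h
    have h3 : 0 < (μ B).toReal := ENNReal.toReal_pos hne (measure_ne_top μ B)
    rw [hsetint hB] at h1
    have h4 : K * (μ B).toReal ≤ ‖f‖ * (μ B).toReal := by
      have := neg_le_abs (f (indicatorConstLp 1 hB (measure_ne_top μ B) 1))
      linarith [h2]
    nlinarith
  have haebdd : ∀ᵐ ω ∂μ, |Y₀ ω| < K := by
    rw [ae_iff]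
    refine measure_mono_null ?_ (measure_union_null hup hdown)
    intro ω hω
    simp only [Set.mem_setOf_eq, not_lt] at hω
    rcases le_abs.1 hω with h | h
    · exact Or.inl h
    · exact Or.inr (by simp only [Set.mem_setOf_eq]; linarith)
  set Y : Ω → ℝ := fun ω => if |Y₀ ω| < K then Y₀ ω else 0 with hYdef
  have hYmeas : Measurable Y :=
    Measurable.ite (measurableSet_lt (measurable_abs.comp hY₀meas) measurable_const)
      hY₀meas measurable_const
  have hYbdd : ∀ ω, |Y ω| ≤ K := by
    intro ω
    by_cases h : |Y₀ ω| < K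
    · simp only [hYdef, if_pos h]; exact h.le
    · simp only [hYdef, if_neg h, abs_zero]; exact hKpos.le
  have hYae : Y =ᵐ[μ] Y₀ := by
    filter_upwards [haebdd] with ω h
    simp only [hYdef, if_pos h]
  refine ⟨Y, K, hYmeas, hYbdd, ?_⟩
  -- continuity of the pairing against Y
  have hintmul : ∀ g : Lp ℝ 1 μ, Integrable (fun ω => (g : Ω → ℝ) ω * Y ω) μ := by
    intro g
    have h := (L1.integrable_coeFn g).bdd_mul hYmeas.aestronglyMeasurable
      (Filter.Eventually.of_forall fun ω => by rw [Real.norm_eq_abs]; exact hYbdd ω)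
    exact h.congr (Filter.Eventually.of_forall fun ω => mul_comm _ _)
  have hcont : Continuous fun g : Lp ℝ 1 μ => ∫ ω, (g : Ω → ℝ) ω * Y ω ∂μ := by
    have hlip : LipschitzWith (Real.toNNReal K) fun g : Lp ℝ 1 μ =>
        ∫ ω, (g : Ω → ℝ) ω * Y ω ∂μ := by
      refine LipschitzWith.of_dist_le_mul fun g₁ g₂ => ?_
      rw [Real.dist_eq, dist_eq_norm]
      have hsub : ∫ ω, (g₁ : Ω → ℝ) ω * Y ω ∂μ - ∫ ω, (g₂ : Ω → ℝ) ω * Y ω ∂μ =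
          ∫ ω, ((g₁ : Ω → ℝ) ω - (g₂ : Ω → ℝ) ω) * Y ω ∂μ := by
        rw [← integral_sub (hintmul g₁) (hintmul g₂)]
        congr 1; funext ω; ring
      rw [hsub]
      have hsubint : Integrable (fun ω => ((g₁ : Ω → ℝ) ω - (g₂ : Ω → ℝ) ω) * Y ω) μ := by
        have h := ((L1.integrable_coeFn g₁).sub (L1.integrable_coeFn g₂)).bdd_mul
          hYmeas.aestronglyMeasurable
          (Filter.Eventually.of_forall fun ω => by rw [Real.norm_eq_abs]; exact hYbdd ω)
        exact h.congr (Filter.Eventually.of_forall fun ω => mul_comm _ _)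
      have h1 : ‖∫ ω, ((g₁ : Ω → ℝ) ω - (g₂ : Ω → ℝ) ω) * Y ω ∂μ‖ ≤
          ∫ ω, K * ‖(g₁ : Ω → ℝ) ω - (g₂ : Ω → ℝ) ω‖ ∂μ := by
        refine le_trans (norm_integral_le_integral_norm _) ?_
        refine integral_mono hsubint.norm
          (((L1.integrable_coeFn g₁).sub (L1.integrable_coeFn g₂)).norm.const_mul K)
          fun ω => ?_
        rw [norm_mul]
        rw [mul_comm K _]
        refine mul_le_mul_of_nonneg_left ?_ (norm_nonneg _)
        rw [Real.norm_eq_abs]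
        exact hYbdd ω
      have h2 : ∫ ω, K * ‖(g₁ : Ω → ℝ) ω - (g₂ : Ω → ℝ) ω‖ ∂μ = K * dist g₁ g₂ := by
        rw [integral_const_mul]
        congr 1
        rw [L1.dist_eq_integral_dist]
        refine integral_congr_ae ?_
        refine Filter.Eventually.of_forall fun ω => ?_
        simp only [Real.dist_eq, Real.norm_eq_abs]
      rw [h2] at h1
      refine le_trans h1 ?_
      rw [← dist_eq_norm]
      refine mul_le_mul_of_nonneg_right ?_ (dist_nonneg : 0 ≤ dist g₁ g₂)
      exact Real.le_coe_toNNReal K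
    exact hlip.continuous
  -- the two functionals agree on indicators, hence everywhere by `Lp.induction`
  haveI : Fact ((1:ENNReal) ≤ 1) := ⟨le_rfl⟩
  have hYint : ∀ {A : Set Ω}, MeasurableSet A → ∫ ω in A, Y ω ∂μ = ∫ ω in A, Y₀ ω ∂μ :=
    fun hA => integral_congr_ae (ae_restrict_of_ae hYae)
  refine Lp.induction (μ := μ) (E := ℝ) ENNReal.one_ne_top
    (fun g : Lp ℝ 1 μ => f g = ∫ ω, (g : Ω → ℝ) ω * Y ω ∂μ) ?_ ?_ ?_
  · -- indicators
    intro cst A hA hμA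
    rw [Lp.simpleFunc.coe_indicatorConst]
    have hsmul : (indicatorConstLp 1 hA hμA.ne cst : Lp ℝ 1 μ) =
        cst • indicatorConstLp 1 hA hμA.ne (1:ℝ) := by
      refine Lp.ext ?_
      refine indicatorConstLp_coeFn.trans ?_
      refine Filter.EventuallyEq.trans ?_ (Lp.coeFn_smul cst _).symm
      filter_upwards [(indicatorConstLp_coeFn :
        ((indicatorConstLp 1 hA hμA.ne (1:ℝ) : Lp ℝ 1 μ) : Ω → ℝ) =ᵐ[μ]
          A.indicator fun _ => (1:ℝ))] with ω hω
      rw [Pi.smul_apply, hω, smul_eq_mul]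
      by_cases h : ω ∈ A
      · rw [Set.indicator_of_mem h, Set.indicator_of_mem h, mul_one]
      · rw [Set.indicator_of_notMem h, Set.indicator_of_notMem h, mul_zero]
    have hLHS : f (indicatorConstLp 1 hA hμA.ne cst) = cst * ∫ ω in A, Y ω ∂μ := by
      rw [hsmul, ContinuousLinearMap.map_smul, smul_eq_mul]
      congr 1
      have : (measure_ne_top μ A) = hμA.ne := rfl
      rw [hYint hA, hsetint hA]
    rw [hLHS]
    have hRHS : ∫ ω, ((indicatorConstLp 1 hA hμA.ne cst : Lp ℝ 1 μ) : Ω → ℝ) ω * Y ω ∂μ =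
        cst * ∫ ω in A, Y ω ∂μ := by
      have h1 : (fun ω => ((indicatorConstLp 1 hA hμA.ne cst : Lp ℝ 1 μ) : Ω → ℝ) ω * Y ω)
          =ᵐ[μ] fun ω => A.indicator (fun ω => cst * Y ω) ω := by
        filter_upwards [(indicatorConstLp_coeFn :
          ((indicatorConstLp 1 hA hμA.ne cst : Lp ℝ 1 μ) : Ω → ℝ) =ᵐ[μ]
            A.indicator fun _ => cst)] with ω hω
        rw [hω]
        by_cases h : ω ∈ A
        · rw [Set.indicator_of_mem h, Set.indicator_of_mem h]
        · rw [Set.indicator_of_notMem h, Set.indicator_of_notMem h, zero_mul]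
      rw [integral_congr_ae h1, integral_indicator hA, integral_const_mul]
    rw [hRHS]
  · -- additivity
    intro g₁ g₂ hg₁ hg₂ _hdisj h1 h2
    have hco : ((hg₁.toLp g₁ + hg₂.toLp g₂ : Lp ℝ 1 μ) : Ω → ℝ) =ᵐ[μ]
        fun ω => g₁ ω + g₂ ω := by
      filter_upwards [Lp.coeFn_add (hg₁.toLp g₁) (hg₂.toLp g₂), hg₁.coeFn_toLp,
        hg₂.coeFn_toLp] with ω ha hb hc
      rw [ha, Pi.add_apply, hb, hc]
    have hint1 : Integrable (fun ω => g₁ ω * Y ω) μ := by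
      have h := (memLp_one_iff_integrable.1 hg₁).bdd_mul hYmeas.aestronglyMeasurable
        (Filter.Eventually.of_forall fun ω => by rw [Real.norm_eq_abs]; exact hYbdd ω)
      exact h.congr (Filter.Eventually.of_forall fun ω => mul_comm _ _)
    have hint2 : Integrable (fun ω => g₂ ω * Y ω) μ := by
      have h := (memLp_one_iff_integrable.1 hg₂).bdd_mul hYmeas.aestronglyMeasurable
        (Filter.Eventually.of_forall fun ω => by rw [Real.norm_eq_abs]; exact hYbdd ω)
      exact h.congr (Filter.Eventually.of_forall fun ω => mul_comm _ _)
    rw [map_add, h1, h2]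
    have hre : ∫ ω, ((hg₁.toLp g₁ + hg₂.toLp g₂ : Lp ℝ 1 μ) : Ω → ℝ) ω * Y ω ∂μ =
        ∫ ω, (g₁ ω * Y ω + g₂ ω * Y ω) ∂μ := by
      refine integral_congr_ae ?_
      filter_upwards [hco] with ω h
      rw [h]; ring
    rw [hre, integral_add hint1 hint2]
    congr 1
    · refine integral_congr_ae ?_
      filter_upwards [hg₁.coeFn_toLp] with ω h
      rw [h]
    · refine integral_congr_ae ?_
      filter_upwards [hg₂.coeFn_toLp] with ω h
      rw [h]
  · -- closedness
    exact isClosed_eq f.continuous hcont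

end Repr
section Part1

variable {Ω : Type*} [MeasurableSpace Ω]

set_option maxHeartbeats 1000000 in
set_option synthInstance.maxHeartbeats 400000 in
/-- Points of the weak closure of a convex subset of the heart are a.s. limits of sequences
from the set. -/
theorem exists_ae_seq_of_wClosure (μ : Measure Ω) [IsProbabilityMeasure μ]
    {Φ Ψ : OrliczFunction} (hconj : IsConjugate Φ Ψ)
    {C : Set (Ω → ℝ)} (hCsub : ∀ X ∈ C, MemHeart Φ μ X) (hconv : Convex ℝ C)
    {X : Ω → ℝ} (hX : X ∈ wClosure (MemHeart Φ μ) (MemHeart Ψ μ) μ C) :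
    ∃ S : ℕ → Ω → ℝ, (∀ n, S n ∈ C) ∧
      ∀ᵐ ω ∂μ, Filter.Tendsto (fun n => S n ω) atTop (nhds (X ω)) := by
  obtain ⟨hXheart, happrox⟩ := hX
  have hXint : Integrable X μ := MemHeart.integrable' hconj.2.1 hXheart
  have hCint : ∀ Z ∈ C, Integrable Z μ := fun Z hZ =>
    MemHeart.integrable' hconj.2.1 (hCsub Z hZ)
  set X₁ : Lp ℝ 1 μ := (memLp_one_iff_integrable.2 hXint).toLp X with hX₁
  set Cw : Set (Lp ℝ 1 μ) := {g | ∃ Z ∈ C, (g : Ω → ℝ) =ᵐ[μ] Z} with hCw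
  have hCwconv : Convex ℝ Cw := by
    intro g₁ hg₁ g₂ hg₂ a b ha hb hab
    obtain ⟨Z₁, hZ₁C, hZ₁⟩ := hg₁
    obtain ⟨Z₂, hZ₂C, hZ₂⟩ := hg₂
    refine ⟨a • Z₁ + b • Z₂, hconv hZ₁C hZ₂C ha hb hab, ?_⟩
    filter_upwards [Lp.coeFn_add (a • g₁) (b • g₂), Lp.coeFn_smul a g₁, Lp.coeFn_smul b g₂,
      hZ₁, hZ₂] with ω h1 h2 h3 h4 h5
    rw [h1, Pi.add_apply, h2, h3, Pi.smul_apply, Pi.smul_apply, h4, h5]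
    rfl
  have hkey : X₁ ∈ closure Cw := by
    by_contra hnot
    obtain ⟨f, u, hu, hux⟩ := geometric_hahn_banach_closed_point
      hCwconv.closure isClosed_closure hnot
    obtain ⟨Y, K, hYmeas, hYbdd, hYrepr⟩ := exists_repr_L1 μ f
    have hYheart : MemHeart Ψ μ Y := memHeart_of_bound Ψ hYmeas.aestronglyMeasurable
      (Filter.Eventually.of_forall hYbdd)
    have hXpair : pairing μ X Y = f X₁ := by
      rw [hYrepr X₁, pairing]
      refine integral_congr_ae ?_
      filter_upwards [(memLp_one_iff_integrable.2 hXint).coeFn_toLp] with ω h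
      rw [h]
    set ε : ℝ := f X₁ - u with hε
    have hεpos : 0 < ε := sub_pos.2 hux
    obtain ⟨Z, hZC, hZ⟩ := happrox ε hεpos {Y} (by
      intro Y' hY'
      rw [Finset.mem_singleton] at hY'
      rw [hY']
      exact hYheart)
    have hZY := hZ Y (Finset.mem_singleton_self Y)
    set Z₁ : Lp ℝ 1 μ := (memLp_one_iff_integrable.2 (hCint Z hZC)).toLp Z with hZ₁d
    have hZpair : pairing μ Z Y = f Z₁ := by
      rw [hYrepr Z₁, pairing]
      refine integral_congr_ae ?_
      filter_upwards [(memLp_one_iff_integrable.2 (hCint Z hZC)).coeFn_toLp] with ω h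
      rw [h]
    have hZ₁mem : Z₁ ∈ Cw := ⟨Z, hZC, MemLp.coeFn_toLp _⟩
    have hfZ : f Z₁ < u := hu Z₁ (subset_closure hZ₁mem)
    rw [hZpair, hXpair] at hZY
    have h1 := (abs_lt.1 hZY).1
    rw [hε] at h1
    linarith
  obtain ⟨gs, hgs, hgtend⟩ := mem_closure_iff_seq_limit.1 hkey
  choose Zs hZsC hZs using hgs
  have htend2 : Filter.Tendsto (fun n => eLpNorm (Zs n - X) 1 μ) atTop (nhds 0) := by
    have heq : ∀ n, eLpNorm (Zs n - X) 1 μ = ENNReal.ofReal ‖gs n - X₁‖ := by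
      intro n
      have hco : ((gs n - X₁ : Lp ℝ 1 μ) : Ω → ℝ) =ᵐ[μ] Zs n - X := by
        filter_upwards [Lp.coeFn_sub (gs n) X₁, hZs n,
          (memLp_one_iff_integrable.2 hXint).coeFn_toLp] with ω h1 h2 h3
        rw [h1, Pi.sub_apply, h2, h3]
        rfl
      rw [← eLpNorm_congr_ae hco, Lp.norm_def,
        ENNReal.ofReal_toReal (Lp.eLpNorm_ne_top _)]
    have h2 : Filter.Tendsto (fun n => ‖gs n - X₁‖) atTop (nhds 0) :=
      tendsto_iff_norm_sub_tendsto_zero.1 hgtend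
    have h3 := ENNReal.tendsto_ofReal h2
    rw [ENNReal.ofReal_zero] at h3
    refine h3.congr fun n => ?_
    exact (heq n).symm
  have hmeas : TendstoInMeasure μ Zs atTop X :=
    tendstoInMeasure_of_tendsto_eLpNorm one_ne_zero
      (fun n => (hCsub _ (hZsC n)).1) hXheart.1 htend2
  obtain ⟨ns, _hns, hae⟩ := hmeas.exists_seq_tendsto_ae
  exact ⟨fun k => Zs (ns k), fun k => hZsC (ns k), hae⟩

end Part1
/-- For a convex set `C` in the Orlicz heart: every point of the `σ(H^Φ,H^Ψ)`-closure
is an a.s. limit from `C`; conversely, for norm bounded `C`, a.s. convergent sequences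
from `C` are `σ(H^Φ,H^Ψ)`-convergent; hence a norm bounded convex set is
`σ(H^Φ,H^Ψ)`-closed iff it is boundedly a.s. closed. -/
theorem heart_wClosure_ae_characterization {Ω : Type*} [MeasurableSpace Ω]
    (μ : Measure Ω) [IsProbabilityMeasure μ] [NullSingletonClass μ] (Φ Ψ : OrliczFunction)
    (hconj : IsConjugate Φ Ψ)
    (C : Set (Ω → ℝ)) (hCsub : ∀ X ∈ C, MemHeart Φ μ X) (hconv : Convex ℝ C) :
    (∀ X, X ∈ wClosure (MemHeart Φ μ) (MemHeart Ψ μ) μ C →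
      ∃ S : ℕ → Ω → ℝ, (∀ n, S n ∈ C) ∧
        ∀ᵐ ω ∂μ, Tendsto (fun n => S n ω) atTop (nhds (X ω))) ∧
    ((∃ M : ℝ, ∀ X ∈ C, luxNorm Φ μ X ≤ M) →
      ∀ (S : ℕ → Ω → ℝ) (X : Ω → ℝ), (∀ n, S n ∈ C) → MemHeart Φ μ X →
        (∀ᵐ ω ∂μ, Tendsto (fun n => S n ω) atTop (nhds (X ω))) →
        ∀ Y, MemHeart Ψ μ Y →
          Tendsto (fun n => pairing μ (S n) Y) atTop (nhds (pairing μ X Y))) ∧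
    ((∃ M : ℝ, ∀ X ∈ C, luxNorm Φ μ X ≤ M) →
      (WClosed (MemHeart Φ μ) (MemHeart Ψ μ) μ C ↔ BddAEClosed Φ μ C)) := by
  have part1 : ∀ X, X ∈ wClosure (MemHeart Φ μ) (MemHeart Ψ μ) μ C →
      ∃ S : ℕ → Ω → ℝ, (∀ n, S n ∈ C) ∧
        ∀ᵐ ω ∂μ, Tendsto (fun n => S n ω) atTop (nhds (X ω)) :=
    fun X hX => exists_ae_seq_of_wClosure μ hconj hCsub hconv hX
  have part2 : (∃ M : ℝ, ∀ X ∈ C, luxNorm Φ μ X ≤ M) →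
      ∀ (S : ℕ → Ω → ℝ) (X : Ω → ℝ), (∀ n, S n ∈ C) → MemHeart Φ μ X →
        (∀ᵐ ω ∂μ, Tendsto (fun n => S n ω) atTop (nhds (X ω))) →
        ∀ Y, MemHeart Ψ μ Y →
          Tendsto (fun n => pairing μ (S n) Y) atTop (nhds (pairing μ X Y)) := by
    rintro ⟨M, hM⟩ S X hS hX hae Y hY
    exact pairing_tendsto_of_ae μ hconj (fun n => hCsub _ (hS n))
      (fun n => hM _ (hS n)) hX hae hY
  refine ⟨part1, part2, fun hMbd => ⟨fun hWC => ?_, fun hBAC => ?_⟩⟩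
  · -- weakly closed → boundedly a.s. closed
    intro S L hS _hbound hL hae
    refine hWC ⟨hL, fun ε hε F hF => ?_⟩
    have hconv' : ∀ Y ∈ F, Tendsto (fun n => pairing μ (S n) Y) atTop
        (nhds (pairing μ L Y)) := fun Y hY => part2 hMbd S L hS hL hae Y (hF Y hY)
    have hev : ∀ᶠ n in atTop, ∀ Y ∈ F, |pairing μ (S n) Y - pairing μ L Y| < ε := by
      rw [eventually_all_finset]
      intro Y hY
      obtain ⟨N, hN⟩ := Metric.tendsto_atTop.1 (hconv' Y hY) ε hε
      refine Filter.eventually_atTop.2 ⟨N, fun n hn => ?_⟩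
      have := hN n hn
      rwa [Real.dist_eq] at this
    obtain ⟨n, hn⟩ := hev.exists
    exact ⟨S n, hS n, hn⟩
  · -- boundedly a.s. closed → weakly closed
    intro X hX
    obtain ⟨S, hSC, hae⟩ := part1 X hX
    obtain ⟨M, hM⟩ := hMbd
    exact hBAC S X hSC ⟨M, fun n => hM _ (hSC n)⟩ hX.1 hae
end
end
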